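/- Let G = Z_p^2 × Z_q with p, q distinct primes and S ⊆ G a spectral set with gcd(|G|, |S|) = 1 and |S| > 1 such that neither S nor its spectrum Λ is contained in a proper coset structure forcing earlier cases. Then a contradiction arises: some character of order pq vanishes on S, so by Lam–Leung |S| = kp + ℓq with k, ℓ ≥ 0, but 1 < |S| < q forces ℓ = 0 and p | |S|, contradicting gcd(|G|,|S|) = 1. Hence every spectral set S in G with gcd(|G|,|S|) = 1 satisfies |S| = 1. -/

import Mathlib

open Complex Finset

noncomputable def chiZp2 (p : ℕ) (a u : ZMod p × ZMod p) : ℂ :=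
  Complex.exp (2 * Real.pi * Complex.I * (((u.1 * a.1 + u.2 * a.2 : ZMod p).val : ℂ) / p))

noncomputable def chiG (p q : ℕ) (l x : (ZMod p × ZMod p) × ZMod q) : ℂ :=
  chiZp2 p l.1 x.1 *
    Complex.exp (2 * Real.pi * Complex.I * (((x.2 * l.2 : ZMod q).val : ℂ) / q))

def IsSpectrum (p q : ℕ) [NeZero p] [NeZero q]
    (S Λ : Finset ((ZMod p × ZMod p) × ZMod q)) : Prop :=
  Λ.card = S.card ∧ ∀ l ∈ Λ, ∀ l' ∈ Λ, l ≠ l' →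
    ∑ x ∈ S, chiG p q l x * (starRingEnd ℂ) (chiG p q l' x) = 0

def IsSpectral (p q : ℕ) [NeZero p] [NeZero q]
    (S : Finset ((ZMod p × ZMod p) × ZMod q)) : Prop :=
  ∃ Λ, IsSpectrum p q S Λ

def Tiles (p q : ℕ) [NeZero p] [NeZero q]
    (S : Finset ((ZMod p × ZMod p) × ZMod q)) : Prop :=
  ∃ T : Finset ((ZMod p × ZMod p) × ZMod q),
    S.card * T.card = Fintype.card ((ZMod p × ZMod p) × ZMod q) ∧
    ∀ g, ∃ s ∈ S, ∃ t ∈ T, s + t = g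

open Polynomial


noncomputable def ee (n : ℕ) : ℂ := Complex.exp (2 * Real.pi * Complex.I / n)

lemma ee_prim (n : ℕ) [NeZero n] : IsPrimitiveRoot (ee n) n :=
  Complex.isPrimitiveRoot_exp n (NeZero.ne n)

lemma ee_pow_n (n : ℕ) [NeZero n] : (ee n) ^ n = 1 := (ee_prim n).pow_eq_one

lemma ee_pow_mod (n : ℕ) [NeZero n] (a : ℕ) : (ee n) ^ (a % n) = (ee n) ^ a := by
  conv_rhs => rw [← Nat.div_add_mod a n]
  rw [pow_add, pow_mul, ee_pow_n, one_pow, one_mul]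

lemma ee_pow_natCast (n : ℕ) [NeZero n] (a : ℕ) :
    (ee n) ^ ((a : ZMod n)).val = (ee n) ^ a := by
  rw [ZMod.val_natCast, ee_pow_mod]

lemma ee_pow_val_add (n : ℕ) [NeZero n] (z w : ZMod n) :
    (ee n) ^ ((z + w).val) = (ee n) ^ z.val * (ee n) ^ w.val := by
  rw [ZMod.val_add, ee_pow_mod, pow_add]

lemma ee_conj (n : ℕ) [NeZero n] (z : ZMod n) :
    (starRingEnd ℂ) ((ee n) ^ z.val) = (ee n) ^ ((-z).val) := by
  have h1 : (ee n) ^ z.val * (ee n) ^ ((-z).val) = 1 := by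
    rw [← ee_pow_val_add, add_neg_cancel, ZMod.val_zero, pow_zero]
  have habs : ‖(ee n) ^ z.val‖ = 1 := by
    rw [norm_pow]
    have h2 : 2 * ↑Real.pi * Complex.I / ↑n = (↑(2 * Real.pi / n) : ℝ) * Complex.I := by
      push_cast; ring
    have : ‖ee n‖ = 1 := by
      rw [ee, h2, Complex.norm_exp_ofReal_mul_I]
    rw [this, one_pow]
  have : (starRingEnd ℂ) ((ee n) ^ z.val) = ((ee n) ^ z.val)⁻¹ :=
    Complex.inv_eq_conj habs |>.symm
  rw [this]
  exact (eq_inv_of_mul_eq_one_left (by rw [mul_comm] at h1; exact h1)).symm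



lemma sum_zmod_eq_sum_range (n : ℕ) [NeZero n] (f : ZMod n → ℂ) :
    ∑ k : ZMod n, f k = ∑ j ∈ range n, f (j : ZMod n) := by
  refine Finset.sum_bij' (fun k _ => k.val) (fun j _ => (j : ZMod n))
    (fun k _ => mem_range.mpr (ZMod.val_lt k)) (fun j _ => mem_univ _)
    (fun k _ => by simp [ZMod.natCast_val, ZMod.cast_id])
    (fun j hj => ZMod.val_natCast_of_lt (mem_range.mp hj))
    (fun k _ => by simp [ZMod.natCast_val, ZMod.cast_id])

lemma roots_sum_const (n : ℕ) [hn : Fact n.Prime] (d : ZMod n → ℚ)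
    (h : ∑ k : ZMod n, (d k : ℂ) * (ee n) ^ k.val = 0) :
    ∃ r : ℚ, ∀ k, d k = r := by
  haveI : NeZero n := ⟨hn.out.ne_zero⟩
  set P : Polynomial ℚ := ∑ j ∈ range n, C (d (j : ZMod n)) * X ^ j with hP
  have hcoeff : ∀ j < n, P.coeff j = d (j : ZMod n) := by
    intro j hj
    rw [hP, finset_sum_coeff]
    rw [Finset.sum_eq_single j]
    · simp
    · intro b _ hbj; simp [coeff_C_mul, coeff_X_pow, (Ne.symm hbj)]
    · intro hjr; exact absurd (mem_range.mpr hj) hjr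
  have haev : aeval (ee n) P = 0 := by
    rw [hP]
    rw [map_sum]
    simp only [map_mul, map_pow, aeval_C, aeval_X]
    rw [← h, sum_zmod_eq_sum_range]
    apply Finset.sum_congr rfl
    intro j hj
    rw [ZMod.val_natCast_of_lt (mem_range.mp hj)]
    simp [Algebra.algebraMap_eq_smul_one, Rat.smul_one_eq_cast]
  have hdvd : cyclotomic n ℚ ∣ P := by
    rw [cyclotomic_eq_minpoly_rat (ee_prim n) hn.out.pos]
    exact minpoly.dvd ℚ _ haev
  obtain ⟨g, hg⟩ := hdvd
  have hkey : ∀ j < n, P.coeff j = g.coeff 0 * 1 := by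
    rcases eq_or_ne g 0 with h0 | h0
    · intro j hj; rw [hg, h0, mul_zero]; simp
    · have hdegP : P.natDegree ≤ n - 1 := by
        apply (Polynomial.natDegree_sum_le _ _).trans
        refine (Finset.fold_max_le _).mpr ⟨by omega, ?_⟩
        intro j hj
        simp only [Function.comp_apply]
        apply (natDegree_C_mul_le _ _).trans
        rw [natDegree_X_pow]
        have := mem_range.mp hj; omega
      have hΦdeg : (cyclotomic n ℚ).natDegree = n - 1 := by
        rw [natDegree_cyclotomic, Nat.totient_prime hn.out]
      have hg0 : g.natDegree = 0 := by
        have := natDegree_mul (cyclotomic_ne_zero n ℚ) h0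
        rw [← hg, hΦdeg] at this
        have hn2 := hn.out.two_le
        omega
      obtain ⟨r, rfl⟩ := natDegree_eq_zero.mp hg0
      intro j hj
      rw [hg, cyclotomic_prime, coeff_mul_C, coeff_C]
      have : (∑ i ∈ range n, (X : ℚ[X]) ^ i).coeff j = 1 := by
        rw [finset_sum_coeff]
        rw [Finset.sum_eq_single j]
        · simp
        · intro b _ hbj; simp [coeff_X_pow, (Ne.symm hbj)]
        · intro hjr; exact absurd (mem_range.mpr hj) hjr
      rw [this]; simp [mul_comm]
  refine ⟨g.coeff 0, fun k => ?_⟩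
  have hk := hkey k.val (ZMod.val_lt k)
  rw [hcoeff k.val (ZMod.val_lt k)] at hk
  simpa [ZMod.natCast_val, ZMod.cast_id] using hk




lemma dvd_card_of_prime_roots_sum_zero {X : Type*} (n : ℕ) [hn : Fact n.Prime]
    (S : Finset X) (f : X → ZMod n) (h : ∑ x ∈ S, (ee n) ^ (f x).val = 0) :
    n ∣ S.card := by
  haveI : NeZero n := ⟨hn.out.ne_zero⟩
  classical
  set c : ZMod n → ℕ := fun k => (S.filter (fun x => f x = k)).card with hc
  have hfib : ∑ k : ZMod n, ((c k : ℚ) : ℂ) * ee n ^ k.val = 0 := by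
    rw [← h, ← Finset.sum_fiberwise_of_maps_to (fun x _ => mem_univ (f x))
      (fun x => (ee n) ^ (f x).val)]
    apply Finset.sum_congr rfl
    intro k _
    rw [Finset.sum_congr rfl (fun x hx => by
      rw [(Finset.mem_filter.mp hx).2]), Finset.sum_const, hc]
    push_cast
    ring
  obtain ⟨r, hr⟩ := roots_sum_const n (fun k => (c k : ℚ)) hfib
  have hcard : S.card = ∑ k : ZMod n, c k :=
    Finset.card_eq_sum_card_fiberwise (fun x _ => mem_univ (f x))
  have : (S.card : ℚ) = n * (c 0 : ℚ) := by
    rw [hcard]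
    push_cast
    rw [Finset.sum_congr rfl (fun k _ => hr k), Finset.sum_const, hr 0]
    simp [mul_comm, ZMod.card]
  have : S.card = n * c 0 := by exact_mod_cast this
  exact ⟨c 0, this⟩




lemma ee_pow_pow (p q : ℕ) [NeZero p] [NeZero q] : (ee (p*q)) ^ q = ee p := by
  unfold ee
  rw [← Complex.exp_nat_mul]
  congr 1
  have hp : (p : ℂ) ≠ 0 := Nat.cast_ne_zero.mpr (NeZero.ne p)
  have hq : (q : ℂ) ≠ 0 := Nat.cast_ne_zero.mpr (NeZero.ne q)
  push_cast
  field_simp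

-- sum of ee p ^ (u.val) over all u = 0
lemma ee_total_sum (p : ℕ) [hp : Fact p.Prime] :
    ∑ u : ZMod p, (ee p) ^ u.val = 0 := by
  haveI : NeZero p := ⟨hp.out.ne_zero⟩
  rw [sum_zmod_eq_sum_range]
  have := (ee_prim p).geom_sum_eq_zero hp.out.one_lt
  rw [← this]
  apply Finset.sum_congr rfl
  intro j hj
  rw [ZMod.val_natCast_of_lt (mem_range.mp hj)]

lemma W_eval (p : ℕ) [hp : Fact p.Prime] (i : ZMod p) :
    ∑ s ∈ Finset.univ.erase (0 : ZMod p), (ee p) ^ ((s * i).val) =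
      if i = 0 then ((p : ℂ) - 1) else -1 := by
  haveI : NeZero p := ⟨hp.out.ne_zero⟩
  rcases eq_or_ne i 0 with rfl | hi
  · simp only [mul_zero, ZMod.val_zero, pow_zero, Finset.sum_const, nsmul_eq_mul, mul_one,
      if_pos rfl]
    rw [Finset.card_erase_of_mem (mem_univ _), Finset.card_univ, ZMod.card]
    have : (1:ℕ) ≤ p := hp.out.one_lt.le
    push_cast [Nat.cast_sub this]
    ring
  · rw [if_neg hi]
    have hreindex : ∑ s ∈ Finset.univ.erase (0 : ZMod p), (ee p) ^ ((s * i).val) =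
        ∑ u ∈ Finset.univ.erase (0 : ZMod p), (ee p) ^ (u.val) := by
      refine Finset.sum_bij' (fun s _ => s * i) (fun u _ => u * i⁻¹) ?_ ?_ ?_ ?_ ?_
      · intro s hs
        simp only [Finset.mem_erase, mem_univ, and_true] at hs ⊢
        exact mul_ne_zero hs hi
      · intro u hu
        simp only [Finset.mem_erase, mem_univ, and_true] at hu ⊢
        exact mul_ne_zero hu (inv_ne_zero hi)
      · intro s _
        field_simp
      · intro u _
        field_simp
      · intro s _; rfl
    rw [hreindex]
    have htot := ee_total_sum p
    rw [← Finset.add_sum_erase _ _ (mem_univ (0 : ZMod p))] at htot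
    simp only [ZMod.val_zero, pow_zero] at htot
    linear_combination htot

lemma p_dvd_card_of_pq_roots_sum_zero {α : Type*} (p q : ℕ) [hp : Fact p.Prime]
    [hq : Fact q.Prime] (hpq : p ≠ q) (S : Finset α) (f : α → ZMod p) (g : α → ZMod q)
    (h : ∑ x ∈ S, (ee p) ^ (f x).val * (ee q) ^ (g x).val = 0)
    (hcard : S.card < q) : p ∣ S.card := by
  haveI : NeZero p := ⟨hp.out.ne_zero⟩
  haveI : NeZero q := ⟨hq.out.ne_zero⟩
  haveI : NeZero (p*q) := ⟨Nat.mul_ne_zero hp.out.ne_zero hq.out.ne_zero⟩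
  classical
  have hcop : Nat.Coprime p q := (Nat.coprime_primes hp.out hq.out).mpr hpq
  set ζ : ℂ := ee (p*q) with hζ
  have hζq : ζ ^ q = ee p := ee_pow_pow p q
  have hζp : ζ ^ p = ee q := by rw [hζ, mul_comm]; exact ee_pow_pow q p
  set c : ZMod p × ZMod q → ℕ := fun z => (S.filter (fun x => (f x, g x) = z)).card with hc
  -- main eval identity for any power w = ζ^t
  have heval : ∀ t : ℕ, (t : ZMod q) = 1 → ∀ s : ZMod p, (t : ZMod p) = s →
      ∑ z : ZMod p × ZMod q, ((c z : ℚ) : ℂ) * (ζ^t) ^ (q * z.1.val + p * z.2.val) =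
      ∑ z : ZMod p × ZMod q, ((c z : ℚ) : ℂ) * ((ee p) ^ ((s * z.1).val) * (ee q) ^ (z.2.val)) := by
    intro t htq s hts
    apply Finset.sum_congr rfl
    intro z _
    congr 1
    rw [← pow_mul, Nat.mul_add, pow_add]
    have h1 : ζ ^ (t * (q * z.1.val)) = (ee p) ^ ((s * z.1).val) := by
      rw [show t * (q * z.1.val) = q * (t * z.1.val) by ring, pow_mul, hζq,
        ← ee_pow_natCast p (t * z.1.val)]
      congr 2
      push_cast [hts]
      rw [ZMod.natCast_val, ZMod.cast_id]
    have h2 : ζ ^ (t * (p * z.2.val)) = (ee q) ^ (z.2.val) := by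
      rw [show t * (p * z.2.val) = p * (t * z.2.val) by ring, pow_mul, hζp,
        ← ee_pow_natCast q (t * z.2.val)]
      congr 2
      push_cast [htq]
      rw [one_mul, ZMod.natCast_val, ZMod.cast_id]
    rw [h1, h2]
  -- the polynomial
  set F : Polynomial ℚ := ∑ z : ZMod p × ZMod q, C (c z : ℚ) * X ^ (q * z.1.val + p * z.2.val)
    with hF
  have haevF : ∀ w : ℂ, aeval w F = ∑ z : ZMod p × ZMod q,
      ((c z : ℚ) : ℂ) * w ^ (q * z.1.val + p * z.2.val) := by
    intro w
    rw [hF, map_sum]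
    apply Finset.sum_congr rfl
    intro z _
    simp [Algebra.algebraMap_eq_smul_one, Rat.smul_one_eq_cast]
  -- F(ζ) = 0
  have hsum_fib : ∑ z : ZMod p × ZMod q,
      ((c z : ℚ) : ℂ) * ((ee p) ^ (z.1.val) * (ee q) ^ (z.2.val)) = 0 := by
    rw [← h, ← Finset.sum_fiberwise S (fun x => (f x, g x))
      (fun x => (ee p) ^ (f x).val * (ee q) ^ (g x).val)]
    apply Finset.sum_congr rfl
    intro z _
    rw [Finset.sum_congr rfl (fun x hx => by
      have := (Finset.mem_filter.mp hx).2
      rw [show f x = z.1 by rw [← this], show g x = z.2 by rw [← this]]),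
      Finset.sum_const, hc]
    push_cast
    ring
  have haevζ : aeval ζ F = 0 := by
    rw [haevF]
    rw [← hsum_fib]
    apply Finset.sum_congr rfl
    intro z _
    congr 1
    rw [pow_add, pow_mul, pow_mul, hζq, hζp]
  have hdvd : cyclotomic (p*q) ℚ ∣ F := by
    rw [cyclotomic_eq_minpoly_rat (ee_prim (p*q)) (Nat.pos_of_ne_zero (NeZero.ne _))]
    exact minpoly.dvd ℚ _ haevζ
  -- for every s ≠ 0 get the twisted vanishing
  have htwist : ∀ s : ZMod p, s ≠ 0 →
      ∑ z : ZMod p × ZMod q, ((c z : ℚ) : ℂ) * ((ee p) ^ ((s * z.1).val) * (ee q) ^ (z.2.val))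
        = 0 := by
    intro s hs
    obtain ⟨t, htp, htq⟩ := Nat.chineseRemainder hcop s.val 1
    have htp' : (t : ZMod p) = s := by
      rw [(ZMod.natCast_eq_natCast_iff _ _ _).mpr htp]
      simp [ZMod.natCast_val, ZMod.cast_id]
    have htq' : (t : ZMod q) = 1 := by
      rw [(ZMod.natCast_eq_natCast_iff _ _ _).mpr htq]
      simp
    have hcopt : Nat.Coprime t (p*q) := by
      apply Nat.Coprime.mul_right
      · rw [Nat.coprime_comm]
        rw [Nat.Prime.coprime_iff_not_dvd hp.out]
        intro hdvd
        exact hs (by rw [← htp']; exact (ZMod.natCast_eq_zero_iff t p).mpr hdvd)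
      · rw [Nat.coprime_comm, Nat.Prime.coprime_iff_not_dvd hq.out]
        intro hdvd
        have := (ZMod.natCast_eq_zero_iff t q).mpr hdvd
        rw [htq'] at this
        exact one_ne_zero this
    have hprim : IsPrimitiveRoot (ζ ^ t) (p*q) := (ee_prim (p*q)).pow_of_coprime t hcopt
    have hroot : aeval (ζ ^ t) (cyclotomic (p*q) ℚ) = 0 := by
      have h1 := hprim.isRoot_cyclotomic (Nat.pos_of_ne_zero (NeZero.ne (p*q)))
      rw [Polynomial.IsRoot] at h1
      rw [Polynomial.aeval_def, ← Polynomial.eval_map, Polynomial.map_cyclotomic]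
      exact h1
    have hFt : aeval (ζ ^ t) F = 0 := by
      obtain ⟨G, hG⟩ := hdvd
      rw [hG, map_mul, hroot, zero_mul]
    rw [haevF] at hFt
    rw [← hFt, heval t htq' s htp']
  -- sum over s ≠ 0 and exchange
  have hbig : ∑ z : ZMod p × ZMod q, ((c z : ℚ) : ℂ) *
      ((if z.1 = 0 then ((p : ℂ) - 1) else -1) * (ee q) ^ (z.2.val)) = 0 := by
    have h0 : ∑ s ∈ Finset.univ.erase (0 : ZMod p), ∑ z : ZMod p × ZMod q,
        ((c z : ℚ) : ℂ) * ((ee p) ^ ((s * z.1).val) * (ee q) ^ (z.2.val)) = 0 :=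
      Finset.sum_eq_zero (fun s hs => htwist s (Finset.mem_erase.mp hs).1)
    rw [Finset.sum_comm] at h0
    rw [← h0]
    apply Finset.sum_congr rfl
    intro z _
    rw [← W_eval p z.1]
    simp only [Finset.sum_mul, Finset.mul_sum]
  -- package into a q-root vanishing sum
  set d : ZMod q → ℚ := fun k => (p : ℚ) * (c (0, k) : ℚ) - ∑ i : ZMod p, (c (i,k) : ℚ)
    with hd
  have hdsum : ∑ k : ZMod q, ((d k : ℚ) : ℂ) * (ee q) ^ k.val = 0 := by
    rw [← hbig, Fintype.sum_prod_type_right]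
    symm
    apply Finset.sum_congr rfl
    intro k _
    have hin : ∑ i : ZMod p, ((c (i,k) : ℚ) : ℂ) * (if i = 0 then ((p : ℂ) - 1) else -1)
        = (p : ℂ) * ((c (0,k) : ℚ) : ℂ) - ∑ i : ZMod p, ((c (i,k) : ℚ) : ℂ) := by
      rw [← Finset.add_sum_erase _ _ (mem_univ (0 : ZMod p)), if_pos rfl]
      rw [Finset.sum_congr rfl (fun i hi => by
        rw [if_neg (Finset.mem_erase.mp hi).1, mul_neg_one]),
        Finset.sum_neg_distrib,
        Finset.sum_erase_eq_sub (mem_univ (0 : ZMod p))]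
      push_cast
      ring
    have h1 : ∑ i : ZMod p, ((c (i,k) : ℚ) : ℂ) * ((if i = 0 then ((p : ℂ) - 1) else -1)
            * (ee q) ^ k.val)
        = (∑ i : ZMod p, ((c (i,k) : ℚ) : ℂ) * (if i = 0 then ((p : ℂ) - 1) else -1))
            * (ee q) ^ k.val := by
      rw [Finset.sum_mul]
      exact Finset.sum_congr rfl fun i _ => by ring
    rw [h1, hin]
    simp only [hd]
    push_cast
    ring
  obtain ⟨r, hr⟩ := roots_sum_const q d hdsum
  set mk : ZMod q → ℕ := fun k => ∑ i : ZMod p, c (i,k) with hmk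
  have hScard : S.card = ∑ k : ZMod q, mk k := by
    have h1 : S.card = ∑ z : ZMod p × ZMod q, c z :=
      Finset.card_eq_sum_card_fiberwise (fun x _ => mem_univ _)
    rw [h1, Fintype.sum_prod_type_right]
  obtain ⟨k0, hk0⟩ : ∃ k0, mk k0 = 0 := by
    by_contra hne
    push_neg at hne
    have h1 : ∀ k : ZMod q, 1 ≤ mk k := fun k => Nat.one_le_iff_ne_zero.mpr (hne k)
    have hq_le : q ≤ S.card := by
      rw [hScard]
      calc q = ∑ _k : ZMod q, 1 := by simp [ZMod.card]
        _ ≤ ∑ k, mk k := Finset.sum_le_sum (fun k _ => h1 k)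
    omega
  have hsum_cast : ∀ k, (∑ i : ZMod p, (c (i,k) : ℚ)) = (mk k : ℚ) := by
    intro k; rw [hmk]; push_cast; rfl
  have hc0k0 : c (0, k0) = 0 := by
    have h2 := Finset.single_le_sum (f := fun i => c (i,k0))
      (fun i _ => Nat.zero_le _) (mem_univ (0 : ZMod p))
    have h4 : c (0, k0) ≤ mk k0 := h2
    omega
  have hr0 : r = 0 := by
    rw [← hr k0]
    simp only [hd]
    rw [hsum_cast k0, hk0, hc0k0]
    push_cast
    ring
  have hfinal : ∀ k, (mk k : ℚ) = p * (c (0,k) : ℚ) := by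
    intro k
    have h3 := hr k
    rw [hr0] at h3
    simp only [hd] at h3
    rw [hsum_cast k] at h3
    linarith
  have hQ : (S.card : ℚ) = p * ∑ k : ZMod q, (c (0,k) : ℚ) := by
    rw [hScard]
    push_cast
    rw [Finset.sum_congr rfl (fun k (_ : k ∈ univ) => hfinal k), ← Finset.mul_sum]
  have hN : S.card = p * ∑ k : ZMod q, c (0,k) := by exact_mod_cast hQ
  exact ⟨_, hN⟩




lemma exp_val_eq_ee_pow (n : ℕ) (z : ZMod n) :
    Complex.exp (2 * Real.pi * Complex.I * ((z.val : ℂ) / n)) = (ee n) ^ z.val := by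
  rw [ee, ← Complex.exp_nat_mul]
  congr 1
  ring

lemma chiG_eq (p q : ℕ) (l x : (ZMod p × ZMod p) × ZMod q) :
    chiG p q l x = (ee p) ^ ((x.1.1 * l.1.1 + x.1.2 * l.1.2 : ZMod p).val) *
      (ee q) ^ ((x.2 * l.2 : ZMod q).val) := by
  rw [chiG, chiZp2, exp_val_eq_ee_pow, exp_val_eq_ee_pow]

lemma chiG_mul_conj (p q : ℕ) [NeZero p] [NeZero q] (l l' x : (ZMod p × ZMod p) × ZMod q) :
    chiG p q l x * (starRingEnd ℂ) (chiG p q l' x) = chiG p q (l - l') x := by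
  rw [chiG_eq, chiG_eq, chiG_eq, map_mul, ee_conj, ee_conj]
  rw [mul_mul_mul_comm, ← ee_pow_val_add, ← ee_pow_val_add]
  congr 2
  · congr 1
    simp only [Prod.fst_sub, Prod.snd_sub]
    ring
  · congr 1
    simp only [Prod.snd_sub]
    ring

theorem coprime_spectral_is_singleton (p q : ℕ) [Fact p.Prime] [Fact q.Prime] (hpq : p ≠ q)
    (S : Finset ((ZMod p × ZMod p) × ZMod q)) (hS : IsSpectral p q S)
    (hgcd : Nat.gcd (Fintype.card ((ZMod p × ZMod p) × ZMod q)) S.card = 1) :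
    S.card = 1 := by
  haveI hp : Fact p.Prime := inferInstance
  haveI hq : Fact q.Prime := inferInstance
  haveI : NeZero p := ⟨hp.out.ne_zero⟩
  haveI : NeZero q := ⟨hq.out.ne_zero⟩
  obtain ⟨Λ, hΛcard, horth⟩ := hS
  have hcardG : Fintype.card ((ZMod p × ZMod p) × ZMod q) = p * p * q := by
    simp [ZMod.card]
  have hpG : p ∣ Fintype.card ((ZMod p × ZMod p) × ZMod q) := by
    rw [hcardG]; exact ⟨p * q, by ring⟩
  have hqG : q ∣ Fintype.card ((ZMod p × ZMod p) × ZMod q) := by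
    rw [hcardG]; exact ⟨p * p, by ring⟩
  have hpS : ¬ p ∣ S.card := by
    intro hdvd
    have := Nat.dvd_gcd hpG hdvd
    rw [hgcd] at this
    have := Nat.eq_one_of_dvd_one this
    exact hp.out.one_lt.ne' this
  have hqS : ¬ q ∣ S.card := by
    intro hdvd
    have h2 := Nat.dvd_gcd hqG hdvd
    rw [hgcd] at h2
    exact hq.out.one_lt.ne' (Nat.eq_one_of_dvd_one h2)
  by_contra hne
  have hS0 : S.card ≠ 0 := by
    intro h0
    rw [h0, Nat.gcd_zero_right, hcardG] at hgcd
    have : p ∣ 1 := hgcd ▸ ⟨p * q, by ring⟩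
    exact hp.out.one_lt.ne' (Nat.eq_one_of_dvd_one this)
  have hS2 : 2 ≤ S.card := by omega
  have hvan : ∀ l ∈ Λ, ∀ l' ∈ Λ, l ≠ l' → ∑ x ∈ S, chiG p q (l - l') x = 0 := by
    intro l hl l' hl' hll
    rw [← horth l hl l' hl' hll]
    exact Finset.sum_congr rfl fun x _ => (chiG_mul_conj p q l l' x).symm
  have hinj : ∀ l ∈ Λ, ∀ l' ∈ Λ, l.2 = l'.2 → l = l' := by
    intro l hl l' hl' h2
    by_contra hll
    have hv := hvan l hl l' hl' hll
    have ha2 : (l - l').2 = 0 := by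
      simp only [Prod.snd_sub]
      rw [h2, sub_self]
    have : ∑ x ∈ S, (ee p) ^ ((x.1.1 * (l - l').1.1 + x.1.2 * (l - l').1.2 : ZMod p).val)
        = 0 := by
      rw [← hv]
      apply Finset.sum_congr rfl
      intro x _
      rw [chiG_eq, ha2, mul_zero, ZMod.val_zero, pow_zero, mul_one]
    exact hpS (dvd_card_of_prime_roots_sum_zero p S _ this)
  have hΛle : Λ.card ≤ q := by
    have h3 : Λ.card ≤ Fintype.card (ZMod q) := by
      apply Finset.card_le_card_of_injOn (fun l => l.2) (fun _ _ => mem_univ _)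
      intro l hl l' hl' h2
      exact hinj l hl l' hl' h2
    rwa [ZMod.card] at h3
  have hlt : S.card < q := by
    rcases lt_or_eq_of_le (hΛcard ▸ hΛle) with h4 | h4
    · exact h4
    · exact absurd (h4 ▸ dvd_refl q) (by rw [h4] at hqS ⊢; exact hqS)
  obtain ⟨l, hl, l', hl', hll⟩ := Finset.one_lt_card.mp (by omega : 1 < Λ.card)
  have hv := hvan l hl l' hl' hll
  have hsum : ∑ x ∈ S, (ee p) ^ ((x.1.1 * (l - l').1.1 + x.1.2 * (l - l').1.2 : ZMod p).val)
      * (ee q) ^ ((x.2 * (l - l').2 : ZMod q).val) = 0 := by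
    rw [← hv]
    exact Finset.sum_congr rfl fun x _ => (chiG_eq p q (l - l') x).symm
  exact hpS (p_dvd_card_of_pq_roots_sum_zero p q hpq S _ _ hsum hlt)
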